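/- Let N ∈ ℕ with N ≥ 1 and L, R > 0, and define ξ : ℝ → ℝ by ξ(x) = max_{i=0,…,N} ( (2i/N − 1) L x + (2LR/(N(N+1))) i(N−i) ). Then ξ is convex and L-Lipschitz continuous, and for each i ∈ {1,…,N}, setting x_i = (2i/(N+1) − 1) R, the subdifferential of ξ at x_i is the interval ∂ξ(x_i) = [ (2(i−1)/N − 1) L , (2i/N − 1) L ]; moreover ξ is differentiable at every point of ℝ ∖ {x_1, …, x_N}. -/

import Mathlib

/-- The piecewise affine convex function
`ξ(x) = max_{i=0..N} ((2i/N - 1) L x + (2LR/(N(N+1))) i(N-i))`. -/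
noncomputable def zeta (N : ℕ) (L R : ℝ) : ℝ → ℝ := fun x =>
  (Finset.range (N + 1)).sup' Finset.nonempty_range_add_one fun i =>
    (2 * (i : ℝ) / N - 1) * L * x + 2 * L * R / (N * (N + 1)) * i * ((N : ℝ) - i)

/-- The subdifferential of a function `f : ℝ → ℝ` at `x`. -/
def subdiffR (f : ℝ → ℝ) (x : ℝ) : Set ℝ :=
  {g | ∀ y, f x + g * (y - x) ≤ f y}

namespace ZetaAux

/-- the `j`-th affine piece -/
noncomputable def FF (N : ℕ) (L R : ℝ) (j : ℕ) (x : ℝ) : ℝ :=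
  (2 * (j : ℝ) / N - 1) * L * x + 2 * L * R / (N * (N + 1)) * j * ((N : ℝ) - j)

/-- the breakpoints -/
noncomputable def pp (N : ℕ) (R : ℝ) (k : ℕ) : ℝ := (2 * (k : ℝ) / (N + 1) - 1) * R

lemma zeta_def (N : ℕ) (L R : ℝ) (x : ℝ) :
    zeta N L R x = (Finset.range (N + 1)).sup' Finset.nonempty_range_add_one
      (fun i => FF N L R i x) := rfl

lemma pp_lt (N : ℕ) {R : ℝ} (hR : 0 < R) (k : ℕ) : pp N R k < pp N R (k + 1) := by
  have h : pp N R (k + 1) - pp N R k = 2 * R / (N + 1) := by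
    have hN1 : ((N : ℝ) + 1) ≠ 0 := by positivity
    simp only [pp]
    push_cast
    field_simp
    ring
  have : 0 < 2 * R / ((N : ℝ) + 1) := by positivity
  linarith

lemma FF_affine (N : ℕ) (L R : ℝ) (j : ℕ) (x c : ℝ) :
    FF N L R j x = FF N L R j c + (2 * (j : ℝ) / N - 1) * L * (x - c) := by
  simp only [FF]; ring

lemma key (N : ℕ) (hN : 1 ≤ N) {L R : ℝ} (hL : 0 < L) (hR : 0 < R)
    {j m k : ℕ} (hm : m = k ∨ m + 1 = k) :
    FF N L R j (pp N R k) ≤ FF N L R m (pp N R k) := by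
  have hN0 : (N : ℝ) ≠ 0 := by positivity
  have hN1 : ((N : ℝ) + 1) ≠ 0 := by positivity
  have hzero : ((k : ℝ) - m) * ((k : ℝ) - m - 1) = 0 := by
    rcases hm with rfl | rfl
    · ring
    · push_cast; ring
  have hjj : 0 ≤ ((k : ℝ) - j) * ((k : ℝ) - j - 1) := by
    have h2 : 0 ≤ ((k : ℤ) - j) * ((k : ℤ) - j - 1) := by
      rcases le_or_gt 1 ((k : ℤ) - j) with h | h
      · nlinarith
      · have h3 : (k : ℤ) - j ≤ 0 := by omega
        nlinarith
    have h4 : ((((k : ℤ) - j) * ((k : ℤ) - j - 1) : ℤ) : ℝ) = ((k : ℝ) - j) * ((k : ℝ) - j - 1) := by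
      push_cast; ring
    rw [← h4]; exact_mod_cast h2
  have hdiff : FF N L R m (pp N R k) - FF N L R j (pp N R k)
      = 2 * L * R / (N * (N + 1)) *
        (((k : ℝ) - j) * ((k : ℝ) - j - 1) - ((k : ℝ) - m) * ((k : ℝ) - m - 1)) := by
    simp only [FF, pp]
    field_simp
    ring
  have hpos : 0 < 2 * L * R / ((N : ℝ) * (N + 1)) := by positivity
  nlinarith [mul_nonneg hpos.le hjj]

end ZetaAux

namespace ZetaAux

lemma zeta_eq (N : ℕ) (hN : 1 ≤ N) {L R : ℝ} (hL : 0 < L) (hR : 0 < R)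
    {k : ℕ} (hk : k ≤ N) {x : ℝ}
    (h1 : k = 0 ∨ pp N R k ≤ x) (h2 : k = N ∨ x ≤ pp N R (k + 1)) :
    zeta N L R x = FF N L R k x := by
  rw [zeta_def]
  apply le_antisymm
  · apply Finset.sup'_le
    intro j hj
    have hjN : j ≤ N := Nat.lt_succ_iff.mp (Finset.mem_range.mp hj)
    have hN0 : (0 : ℝ) < N := by positivity
    rcases le_total j k with hjk | hjk
    · rcases h1 with rfl | h1
      · have : j = 0 := Nat.le_zero.mp hjk
        subst this
        exact le_rfl
      · have hkey := key N hN hL hR (j := j) (m := k) (k := k) (Or.inl rfl)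
        have hslope : (2 * (j : ℝ) / N - 1) * L ≤ (2 * (k : ℝ) / N - 1) * L := by
          have : (j : ℝ) ≤ k := by exact_mod_cast hjk
          have : 2 * (j : ℝ) / N ≤ 2 * (k : ℝ) / N := by gcongr
          nlinarith
        have hmul : (2 * (j : ℝ) / N - 1) * L * (x - pp N R k)
            ≤ (2 * (k : ℝ) / N - 1) * L * (x - pp N R k) :=
          mul_le_mul_of_nonneg_right hslope (by linarith)
        calc FF N L R j x
            = FF N L R j (pp N R k) + (2 * (j : ℝ) / N - 1) * L * (x - pp N R k) :=
              FF_affine ..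
          _ ≤ FF N L R k (pp N R k) + (2 * (k : ℝ) / N - 1) * L * (x - pp N R k) := by
              exact add_le_add hkey hmul
          _ = FF N L R k x := (FF_affine ..).symm
    · rcases h2 with rfl | h2
      · have : j = k := le_antisymm hjN hjk
        subst this
        exact le_rfl
      · have hkey := key N hN hL hR (j := j) (m := k) (k := k + 1) (Or.inr rfl)
        have hslope : (2 * (k : ℝ) / N - 1) * L ≤ (2 * (j : ℝ) / N - 1) * L := by
          have : (k : ℝ) ≤ j := by exact_mod_cast hjk
          have : 2 * (k : ℝ) / N ≤ 2 * (j : ℝ) / N := by gcongr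
          nlinarith
        have hmul : (2 * (j : ℝ) / N - 1) * L * (x - pp N R (k + 1))
            ≤ (2 * (k : ℝ) / N - 1) * L * (x - pp N R (k + 1)) :=
          mul_le_mul_of_nonpos_right hslope (by linarith)
        calc FF N L R j x
            = FF N L R j (pp N R (k + 1)) + (2 * (j : ℝ) / N - 1) * L * (x - pp N R (k + 1)) :=
              FF_affine ..
          _ ≤ FF N L R k (pp N R (k + 1)) + (2 * (k : ℝ) / N - 1) * L * (x - pp N R (k + 1)) := by
              exact add_le_add hkey hmul
          _ = FF N L R k x := (FF_affine ..).symm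
  · exact Finset.le_sup' (fun i => FF N L R i x) (Finset.mem_range.mpr (Nat.lt_succ_of_le hk))

lemma convexOn_sup' (n : ℕ) (f : ℕ → ℝ → ℝ) (hf : ∀ i, i ≤ n → ConvexOn ℝ Set.univ (f i)) :
    ConvexOn ℝ Set.univ
      (fun x => (Finset.range (n + 1)).sup' Finset.nonempty_range_add_one (fun i => f i x)) := by
  induction n with
  | zero => simpa using hf 0 le_rfl
  | succ n ih =>
    have hrw : (fun x => (Finset.range (n + 1 + 1)).sup' Finset.nonempty_range_add_one
        (fun i => f i x))
        = (fun x => max (f (n + 1) x)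
            ((Finset.range (n + 1)).sup' Finset.nonempty_range_add_one (fun i => f i x))) := by
      funext x
      simp [Finset.range_add_one, Finset.sup'_insert]
    rw [hrw]
    exact (hf (n + 1) le_rfl).sup (ih fun i hi => hf i (by omega))

lemma lipschitz_sup' (n : ℕ) (K : NNReal) (f : ℕ → ℝ → ℝ)
    (hf : ∀ i, i ≤ n → LipschitzWith K (f i)) :
    LipschitzWith K
      (fun x => (Finset.range (n + 1)).sup' Finset.nonempty_range_add_one (fun i => f i x)) := by
  induction n with
  | zero => simpa using hf 0 le_rfl
  | succ n ih =>
    have hrw : (fun x => (Finset.range (n + 1 + 1)).sup' Finset.nonempty_range_add_one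
        (fun i => f i x))
        = (fun x => max (f (n + 1) x)
            ((Finset.range (n + 1)).sup' Finset.nonempty_range_add_one (fun i => f i x))) := by
      funext x
      simp [Finset.range_add_one, Finset.sup'_insert]
    rw [hrw]
    simpa [max_self] using ((hf (n + 1) le_rfl).max (ih fun i hi => hf i (by omega)))

lemma convexOn_affine (a b : ℝ) : ConvexOn ℝ Set.univ (fun x : ℝ => a * x + b) := by
  refine ⟨convex_univ, ?_⟩
  intro x _ y _ u v hu hv huv
  simp only [smul_eq_mul]
  linear_combination (-b) * huv

lemma lipschitzWith_affine (a b : ℝ) (K : NNReal) (h : |a| ≤ K) :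
    LipschitzWith K (fun x : ℝ => a * x + b) := by
  apply LipschitzWith.of_dist_le_mul
  intro x y
  rw [Real.dist_eq, Real.dist_eq]
  have : a * x + b - (a * y + b) = a * (x - y) := by ring
  rw [this, abs_mul]
  exact mul_le_mul_of_nonneg_right h (abs_nonneg _)

end ZetaAux

open ZetaAux in
/-- `ξ` is convex and `L`-Lipschitz; at `x_i = (2i/(N+1) - 1)R`,
`1 ≤ i ≤ N`, its subdifferential is `[(2(i-1)/N - 1)L, (2i/N - 1)L]`, and `ξ` is
differentiable at every other point of `ℝ`. -/
theorem zeta_properties (N : ℕ) (hN : 1 ≤ N) (L R : ℝ) (hL : 0 < L) (hR : 0 < R) :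
    ConvexOn ℝ Set.univ (zeta N L R) ∧
    LipschitzWith L.toNNReal (zeta N L R) ∧
    (∀ i : ℕ, 1 ≤ i → i ≤ N →
      subdiffR (zeta N L R) ((2 * (i : ℝ) / (N + 1) - 1) * R) =
        Set.Icc ((2 * ((i : ℝ) - 1) / N - 1) * L) ((2 * (i : ℝ) / N - 1) * L)) ∧
    (∀ x : ℝ, (∀ i : ℕ, 1 ≤ i → i ≤ N → x ≠ (2 * (i : ℝ) / (N + 1) - 1) * R) →
      DifferentiableAt ℝ (zeta N L R) x) := by
  have hN0 : (0 : ℝ) < N := by positivity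
  refine ⟨?_, ?_, ?_, ?_⟩
  · -- convexity
    exact convexOn_sup' N (FF N L R) (fun i _ => convexOn_affine _ _)
  · -- Lipschitz
    refine lipschitz_sup' N L.toNNReal (FF N L R) (fun i hi => ?_)
    refine lipschitzWith_affine _ _ _ ?_
    have hL' : ((L.toNNReal : NNReal) : ℝ) = L := Real.coe_toNNReal L hL.le
    rw [hL', abs_mul, abs_of_pos hL]
    have hi' : (i : ℝ) ≤ N := by exact_mod_cast hi
    have habs : |2 * (i : ℝ) / N - 1| ≤ 1 := by
      rw [abs_le]
      constructor
      · have : (0 : ℝ) ≤ 2 * (i : ℝ) / N := by positivity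
        linarith
      · have : 2 * (i : ℝ) / N ≤ 2 := by
          rw [div_le_iff₀ hN0]; linarith
        linarith
    nlinarith
  · -- subdifferential
    intro i h1i hiN
    obtain ⟨m, rfl⟩ : ∃ m, i = m + 1 := ⟨i - 1, by omega⟩
    have hm1N : m + 1 ≤ N := hiN
    have hmN : m ≤ N := by omega
    have hcast : ((m + 1 : ℕ) : ℝ) - 1 = (m : ℝ) := by push_cast; ring
    show subdiffR (zeta N L R) (pp N R (m + 1)) = _
    rw [hcast]
    have hA : zeta N L R (pp N R (m + 1)) = FF N L R (m + 1) (pp N R (m + 1)) :=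
      zeta_eq N hN hL hR hm1N (Or.inr le_rfl) (Or.inr (pp_lt N hR (m + 1)).le)
    have hB : zeta N L R (pp N R (m + 1)) = FF N L R m (pp N R (m + 1)) :=
      zeta_eq N hN hL hR hmN (Or.inr (pp_lt N hR m).le) (Or.inr le_rfl)
    have hC : zeta N L R (pp N R (m + 1 + 1)) = FF N L R (m + 1) (pp N R (m + 1 + 1)) :=
      zeta_eq N hN hL hR hm1N (Or.inr (pp_lt N hR (m + 1)).le) (Or.inr le_rfl)
    have hD : zeta N L R (pp N R m) = FF N L R m (pp N R m) :=
      zeta_eq N hN hL hR hmN (Or.inr le_rfl) (Or.inr (pp_lt N hR m).le)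
    ext g
    simp only [subdiffR, Set.mem_setOf_eq, Set.mem_Icc]
    constructor
    · intro hg
      have hgap1 : 0 < pp N R (m + 1 + 1) - pp N R (m + 1) := sub_pos.mpr (pp_lt N hR (m + 1))
      have hgap0 : 0 < pp N R (m + 1) - pp N R m := sub_pos.mpr (pp_lt N hR m)
      constructor
      · have h := hg (pp N R m)
        rw [hB, hD] at h
        have haff := FF_affine N L R m (pp N R m) (pp N R (m + 1))
        exact le_of_mul_le_mul_right (by nlinarith [h, haff]) hgap0
      · have h := hg (pp N R (m + 1 + 1))
        rw [hA, hC] at h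
        have haff := FF_affine N L R (m + 1) (pp N R (m + 1 + 1)) (pp N R (m + 1))
        exact le_of_mul_le_mul_right (by nlinarith [h, haff]) hgap1
    · rintro ⟨hgl, hgu⟩ y
      have hy1 : FF N L R m y ≤ zeta N L R y := by
        rw [zeta_def]
        exact Finset.le_sup' (fun i => FF N L R i y) (Finset.mem_range.mpr (by omega))
      have hy2 : FF N L R (m + 1) y ≤ zeta N L R y := by
        rw [zeta_def]
        exact Finset.le_sup' (fun i => FF N L R i y) (Finset.mem_range.mpr (by omega))
      rcases le_total y (pp N R (m + 1)) with hy | hy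
      · rw [hB]
        have haff := FF_affine N L R m y (pp N R (m + 1))
        have hmul : g * (y - pp N R (m + 1))
            ≤ (2 * (m : ℝ) / N - 1) * L * (y - pp N R (m + 1)) :=
          mul_le_mul_of_nonpos_right hgl (by linarith)
        linarith
      · rw [hA]
        have haff := FF_affine N L R (m + 1) y (pp N R (m + 1))
        have hmul : g * (y - pp N R (m + 1))
            ≤ (2 * ((m + 1 : ℕ) : ℝ) / N - 1) * L * (y - pp N R (m + 1)) :=
          mul_le_mul_of_nonneg_right hgu (by linarith)
        linarith
  · -- differentiability
    intro x hx
    set T := (Finset.range (N + 1)).filter (fun i => i = 0 ∨ pp N R i < x) with hT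
    have h0T : 0 ∈ T := by
      simp only [hT, Finset.mem_filter, Finset.mem_range]
      exact ⟨by omega, Or.inl trivial⟩
    have hTne : T.Nonempty := ⟨0, h0T⟩
    set k := T.max' hTne with hk
    have hkT : k ∈ T := T.max'_mem hTne
    have hkN : k ≤ N := by
      have := (Finset.mem_filter.mp hkT).1
      simp only [Finset.mem_range] at this
      omega
    have hk0 : k = 0 ∨ pp N R k < x := (Finset.mem_filter.mp hkT).2
    have hup : k = N ∨ x < pp N R (k + 1) := by
      by_cases hkN' : k = N
      · exact Or.inl hkN'
      · right
        have hnotin : ¬ pp N R (k + 1) < x := by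
          intro hlt
          have hmem : k + 1 ∈ T := by
            simp only [hT, Finset.mem_filter, Finset.mem_range]
            exact ⟨by omega, Or.inr hlt⟩
          have := T.le_max' (k + 1) hmem
          omega
        have hne : x ≠ pp N R (k + 1) := hx (k + 1) (by omega) (by omega)
        push_neg at hnotin
        exact lt_of_le_of_ne hnotin hne
    have e1 : ∀ᶠ y in nhds x, (k = 0 ∨ pp N R k ≤ y) := by
      rcases hk0 with h | h
      · exact Filter.Eventually.of_forall (fun y => Or.inl h)
      · exact (eventually_gt_nhds h).mono (fun y hy => Or.inr hy.le)
    have e2 : ∀ᶠ y in nhds x, (k = N ∨ y ≤ pp N R (k + 1)) := by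
      rcases hup with h | h
      · exact Filter.Eventually.of_forall (fun y => Or.inl h)
      · exact (eventually_lt_nhds h).mono (fun y hy => Or.inr hy.le)
    have heq : zeta N L R =ᶠ[nhds x] FF N L R k := by
      filter_upwards [e1, e2] with y hy1 hy2
      exact zeta_eq N hN hL hR hkN hy1 hy2
    have hdiff : DifferentiableAt ℝ (FF N L R k) x := by
      have : DifferentiableAt ℝ
          (fun y : ℝ => (2 * (k : ℝ) / N - 1) * L * y
            + 2 * L * R / (N * (N + 1)) * k * ((N : ℝ) - k)) x := by
        fun_prop
      exact this
    exact heq.differentiableAt_iff.mpr hdiff
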